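/- Let H be a complex Hilbert space and V ⊆ H a subspace equipped with a norm ‖·‖ such that ‖v‖_H ≤ κ⁻¹‖v‖ for all v ∈ V, where κ > 0. Let a : V × V → ℂ be a sesquilinear form satisfying the Gårding-type inequality Re a(v, v) + 2κ²‖v‖_H² ≥ ‖v‖² for all v ∈ V, and assume the adjoint problem is solvable with stability constant C_st > 0: for every f ∈ H there exists z ∈ V with a(w, z) = (w, f)_H for all w ∈ V and ‖z‖ ≤ C_st‖f‖_H. Then a is inf-sup stable: for every u ∈ V with u ≠ 0 there exists v ∈ V with v ≠ 0 and Re a(u, v) ≥ (1 + 2κC_st)⁻¹‖u‖‖v‖. -/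

import Mathlib

/-- Inf-sup stability from a Gårding-type inequality and solvability of the
adjoint problem with stability constant `C_st`: the inf-sup constant is
`(1 + 2κC_st)⁻¹`. -/
theorem stmt_8 {Hs : Type*} [NormedAddCommGroup Hs] [InnerProductSpace ℂ Hs]
    {V : Type*} [NormedAddCommGroup V] [NormedSpace ℂ V]
    (e : V →ₗ[ℂ] Hs) (he : Function.Injective e)
    (κ : ℝ) (hκ : 0 < κ) (hemb : ∀ v : V, ‖e v‖ ≤ κ⁻¹ * ‖v‖)
    (a : V →ₗ[ℂ] V →ₗ⋆[ℂ] ℂ)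
    (hgarding : ∀ v : V, ‖v‖ ^ 2 ≤ (a v v).re + 2 * κ ^ 2 * ‖e v‖ ^ 2)
    (Cst : ℝ) (hCst : 0 < Cst)
    (hadj : ∀ f : Hs, ∃ z : V, (∀ w : V, a w z = (inner ℂ f (e w) : ℂ)) ∧ ‖z‖ ≤ Cst * ‖f‖) :
    ∀ u : V, u ≠ 0 → ∃ v : V, v ≠ 0 ∧ (1 + 2 * κ * Cst)⁻¹ * ‖u‖ * ‖v‖ ≤ (a u v).re := by
  intro u hu
  obtain ⟨z, hz1, hz2⟩ := hadj (e u)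
  set c : ℝ := 2 * κ ^ 2 with hc
  have hcpos : (0:ℝ) < c := by positivity
  set v : V := u + (c : ℂ) • z with hv
  -- value of a u z
  have haz : a u z = (‖e u‖ ^ 2 : ℝ) := by
    rw [hz1 u, inner_self_eq_norm_sq_to_K]
    norm_cast
  have hav : (a u v).re = (a u u).re + c * ‖e u‖ ^ 2 := by
    have h1 : a u v = a u u + (c : ℂ) * a u z := by
      rw [hv, map_add, LinearMap.map_smulₛₗ]
      simp [Complex.conj_ofReal, smul_eq_mul]
    rw [h1, haz]
    simp only [Complex.add_re, Complex.mul_re, Complex.ofReal_re, Complex.ofReal_im]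
    push_cast
    simp [Complex.ofReal_re]
  have hlb : ‖u‖ ^ 2 ≤ (a u v).re := by
    rw [hav]; exact hgarding u
  have hvne : v ≠ 0 := by
    intro h0
    rw [h0] at hlb
    simp at hlb
    have hun : (0:ℝ) < ‖u‖ := norm_pos_iff.mpr hu
    have : (0:ℝ) < ‖u‖ ^ 2 := by positivity
    exact hu hlb
  refine ⟨v, hvne, ?_⟩
  have hvnorm : ‖v‖ ≤ (1 + 2 * κ * Cst) * ‖u‖ := by
    have h1 : ‖v‖ ≤ ‖u‖ + c * ‖z‖ := by
      calc ‖v‖ ≤ ‖u‖ + ‖(c : ℂ) • z‖ := norm_add_le _ _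
        _ = ‖u‖ + c * ‖z‖ := by
          rw [norm_smul]
          simp [Complex.norm_real, abs_of_pos hcpos]
    have h2 : ‖z‖ ≤ Cst * (κ⁻¹ * ‖u‖) := by
      calc ‖z‖ ≤ Cst * ‖e u‖ := hz2
        _ ≤ Cst * (κ⁻¹ * ‖u‖) := by
          exact mul_le_mul_of_nonneg_left (hemb u) hCst.le
    have hk : c * (Cst * (κ⁻¹ * ‖u‖)) = 2 * κ * Cst * ‖u‖ := by
      field_simp [hc]; ring
    nlinarith [hcpos]
  have hden : (0:ℝ) < 1 + 2 * κ * Cst := by positivity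
  calc (1 + 2 * κ * Cst)⁻¹ * ‖u‖ * ‖v‖
      ≤ (1 + 2 * κ * Cst)⁻¹ * ‖u‖ * ((1 + 2 * κ * Cst) * ‖u‖) := by
        apply mul_le_mul_of_nonneg_left hvnorm
        positivity
    _ = ‖u‖ ^ 2 := by field_simp
    _ ≤ (a u v).re := hlb
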